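/- arXiv:2302.05939 — 5 statements merged into one kernel-verified Lean document; each statement's English description precedes it below -/
import Mathlib

section
/- Let G be a group and 𝒢 = {g₁, …, gₐ} a finite subset of G. The semigroup generated by 𝒢 is a group if and only if the neutral element of G can be written as a product of elements of 𝒢 (with repetition allowed) in which every element of 𝒢 occurs at least once. -/
private lemma list_prod_mem_sclosure {G : Type*} [Group G] (s : Set G) :
    ∀ (l : List G), l ≠ [] → (∀ x ∈ l, x ∈ s) → l.prod ∈ Subsemigroup.closure s
  | [], h, _ => absurd rfl h
  | [a], _, hm => by simpa using Subsemigroup.subset_closure (hm a (by simp))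
  | (a :: b :: l), _, hm => by
      rw [List.prod_cons]
      exact mul_mem (Subsemigroup.subset_closure (hm a (by simp)))
        (list_prod_mem_sclosure s (b :: l) (by simp)
          (fun x hx => hm x (List.mem_cons_of_mem _ hx)))

private lemma exists_list_of_mem_sclosure {G : Type*} [Group G] {s : Set G} {x : G}
    (hx : x ∈ Subsemigroup.closure s) :
    ∃ l : List G, l ≠ [] ∧ (∀ y ∈ l, y ∈ s) ∧ l.prod = x := by
  induction hx using Subsemigroup.closure_induction with
  | mem z hz => exact ⟨[z], by simp, by simpa using hz, by simp⟩
  | mul a b _ _ iha ihb =>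
      obtain ⟨la, hla, hma, hpa⟩ := iha
      obtain ⟨lb, hlb, hmb, hpb⟩ := ihb
      exact ⟨la ++ lb, by simp [hla], fun y hy => by
        rcases List.mem_append.1 hy with h | h
        exacts [hma y h, hmb y h], by simp [hpa, hpb]⟩

/-- The semigroup generated by a finite set `𝒢` in a group `G` is a group (i.e. coincides
with the subgroup generated by `𝒢`) iff the identity is represented by a full-image word:
a product of elements of `𝒢` in which every element of `𝒢` occurs at least once. -/
theorem stmt0 {G : Type*} [Group G] (𝒢 : Finset G) :
    (Subsemigroup.closure (𝒢 : Set G) : Set G) = (Subgroup.closure (𝒢 : Set G) : Set G) ↔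
      ∃ w : List G, w ≠ [] ∧ (∀ x ∈ w, x ∈ 𝒢) ∧ (∀ g ∈ 𝒢, g ∈ w) ∧ w.prod = 1 := by
  constructor
  · intro h
    set L := 𝒢.toList with hL
    have hp : L.prod ∈ Subgroup.closure (𝒢 : Set G) :=
      list_prod_mem (fun x hx => Subgroup.subset_closure (by
        simpa using (Finset.mem_toList.1 hx)))
    have hpinv : L.prod⁻¹ ∈ Subsemigroup.closure (𝒢 : Set G) := by
      have : L.prod⁻¹ ∈ (Subgroup.closure (𝒢 : Set G) : Set G) := inv_mem hp
      rw [← h] at this; exact this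
    obtain ⟨u, hune, humem, huprod⟩ := exists_list_of_mem_sclosure hpinv
    refine ⟨u ++ L, by simp [hune], ?_, ?_, ?_⟩
    · intro x hx
      rcases List.mem_append.1 hx with hx | hx
      · exact humem x hx
      · exact Finset.mem_toList.1 hx
    · intro g hg
      exact List.mem_append.2 (Or.inr (Finset.mem_toList.2 hg))
    · simp [huprod]
  · rintro ⟨w, hne, hmem, hfull, hprod⟩
    have h1 : (1 : G) ∈ Subsemigroup.closure (𝒢 : Set G) :=
      hprod ▸ list_prod_mem_sclosure _ w hne hmem
    have hinvg : ∀ g ∈ 𝒢, g⁻¹ ∈ Subsemigroup.closure (𝒢 : Set G) := by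
      intro g hg
      obtain ⟨u, v, hw⟩ := List.append_of_mem (hfull g hg)
      have hmem' : ∀ x ∈ v ++ w ++ u, x ∈ (𝒢 : Set G) := by
        intro x hx
        rcases List.mem_append.1 hx with hx | hx
        · rcases List.mem_append.1 hx with hx | hx
          · exact hmem x (by rw [hw]; simp [hx])
          · exact hmem x hx
        · exact hmem x (by rw [hw]; simp [hx])
      have hne' : v ++ w ++ u ≠ [] := by simp [hne]
      have hval : (v ++ w ++ u).prod = g⁻¹ := by
        have hw' : u.prod * (g * v.prod) = 1 := by
          rw [← List.prod_cons, ← List.prod_append, ← hw, hprod]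
        have : g = u.prod⁻¹ * v.prod⁻¹ := by
          calc g = u.prod⁻¹ * (u.prod * (g * v.prod)) * v.prod⁻¹ := by group
          _ = u.prod⁻¹ * 1 * v.prod⁻¹ := by rw [hw']
          _ = u.prod⁻¹ * v.prod⁻¹ := by group
        rw [List.prod_append, List.prod_append, hprod, mul_one, this]
        group
      exact hval ▸ list_prod_mem_sclosure _ _ hne' hmem'
    have hinv : ∀ x ∈ Subsemigroup.closure (𝒢 : Set G),
        x⁻¹ ∈ Subsemigroup.closure (𝒢 : Set G) := by
      intro x hx
      induction hx using Subsemigroup.closure_induction with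
      | mem z hz => exact hinvg z hz
      | mul a b _ _ iha ihb => rw [mul_inv_rev]; exact mul_mem ihb iha
    apply Set.Subset.antisymm
    · intro x hx
      induction hx using Subsemigroup.closure_induction with
      | mem z hz => exact Subgroup.subset_closure hz
      | mul a b _ _ iha ihb => exact mul_mem iha ihb
    · have : Subgroup.closure (𝒢 : Set G) ≤
          { carrier := (Subsemigroup.closure (𝒢 : Set G) : Set G)
            mul_mem' := fun ha hb => mul_mem ha hb
            one_mem' := h1
            inv_mem' := fun {x} hx => hinv x hx } :=
        (Subgroup.closure_le _).2 (fun x hx => Subsemigroup.subset_closure hx)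
      exact fun x hx => this hx
end

section
/- Let G be a group and 𝒢 a finite subset of G. The semigroup generated by 𝒢 contains the neutral element of G if and only if there exists a nonempty subset ℋ ⊆ 𝒢 such that the semigroup generated by ℋ is a group. -/
private lemma list_prod_mem_closure {G : Type*} [Group G] (s : Set G) :
    ∀ l : List G, l ≠ [] → (∀ x ∈ l, x ∈ s) → l.prod ∈ Subsemigroup.closure s := by
  intro l
  induction l with
  | nil => intro h; exact absurd rfl h
  | cons a t ih =>
    intro _ hmem
    rcases eq_or_ne t [] with rfl | ht
    · simpa using Subsemigroup.subset_closure (hmem a (by simp))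
    · rw [List.prod_cons]
      exact mul_mem (Subsemigroup.subset_closure (hmem a (by simp)))
        (ih ht fun x hx => hmem x (by simp [hx]))

private lemma exists_list_of_mem {G : Type*} [Group G] (s : Set G) {x : G}
    (hx : x ∈ Subsemigroup.closure s) :
    ∃ l : List G, l ≠ [] ∧ (∀ y ∈ l, y ∈ s) ∧ l.prod = x := by
  induction hx using Subsemigroup.closure_induction with
  | mem a ha => exact ⟨[a], by simp, by simpa using ha, by simp⟩
  | mul a b _ _ ha hb =>
    obtain ⟨l1, h1, hm1, hp1⟩ := ha
    obtain ⟨l2, h2, hm2, hp2⟩ := hb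
    exact ⟨l1 ++ l2, by simp [h1], by
      intro y hy; rcases List.mem_append.mp hy with h | h
      exacts [hm1 y h, hm2 y h], by simp [hp1, hp2]⟩

/-- The semigroup generated by a finite subset `𝒢` of a group contains the identity iff
some nonempty subset `ℋ ⊆ 𝒢` generates a semigroup that is a group. -/
theorem stmt1 {G : Type*} [Group G] (𝒢 : Finset G) :
    (1 : G) ∈ Subsemigroup.closure (𝒢 : Set G) ↔
      ∃ ℋ : Finset G, ℋ ⊆ 𝒢 ∧ ℋ.Nonempty ∧
        (Subsemigroup.closure (ℋ : Set G) : Set G) = (Subgroup.closure (ℋ : Set G) : Set G) := by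
  constructor
  · intro h1
    classical
    obtain ⟨l, hne, hmem, hprod⟩ := exists_list_of_mem _ h1
    refine ⟨l.toFinset, ?_, ?_, ?_⟩
    · intro x hx; exact hmem x (List.mem_toFinset.mp hx)
    · obtain ⟨a, ha⟩ := List.exists_mem_of_ne_nil l hne
      exact ⟨a, List.mem_toFinset.mpr ha⟩
    · have hall : ∀ y ∈ l, y ∈ ((l.toFinset : Finset G) : Set G) := by
        intro y hy; simpa using hy
      have hone : (1 : G) ∈ Subsemigroup.closure ((l.toFinset : Finset G) : Set G) := by
        rw [← hprod]; exact list_prod_mem_closure _ l hne hall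
      -- inverses of generators are in the semigroup closure
      have hinv : ∀ h ∈ l, h⁻¹ ∈ Subsemigroup.closure ((l.toFinset : Finset G) : Set G) := by
        intro h hh
        obtain ⟨a, b, rfl⟩ := List.append_of_mem hh
        have key : h * (b ++ (a ++ h :: b) ++ a).prod = 1 := by
          have hp := hprod
          simp only [List.prod_append, List.prod_cons] at hp ⊢
          rw [hp]
          have h2 : h * b.prod = a.prod⁻¹ := eq_inv_of_mul_eq_one_right hp
          rw [mul_one, ← mul_assoc, h2, inv_mul_cancel]
        rw [← eq_inv_of_mul_eq_one_right key]
        refine list_prod_mem_closure _ _ (by simp) ?_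
        intro y hy
        simp only [List.mem_append, List.mem_cons] at hy
        simp only [List.coe_toFinset, List.mem_append, List.mem_cons, Set.mem_setOf_eq]
        tauto
      ext x
      simp only [SetLike.mem_coe]
      constructor
      · intro hx
        exact (Subsemigroup.closure_le (S := (Subgroup.closure
          ((l.toFinset : Finset G) : Set G)).toSubmonoid.toSubsemigroup)).mpr
          Subgroup.subset_closure hx
      · intro hx
        refine Subgroup.closure_induction
          (p := fun y _ => y ∈ Subsemigroup.closure ((l.toFinset : Finset G) : Set G) ∧
            y⁻¹ ∈ Subsemigroup.closure ((l.toFinset : Finset G) : Set G)) ?_ ?_ ?_ ?_ hx |>.1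
        · intro y hy
          exact ⟨Subsemigroup.subset_closure hy, hinv y (by simpa using hy)⟩
        · exact ⟨hone, by simpa using hone⟩
        · intro y z _ _ hy hz
          exact ⟨mul_mem hy.1 hz.1, by rw [mul_inv_rev]; exact mul_mem hz.2 hy.2⟩
        · intro y _ hy; exact ⟨hy.2, by simpa using hy.1⟩
  · rintro ⟨ℋ, hsub, hne, heq⟩
    have h1 : (1 : G) ∈ Subsemigroup.closure ((ℋ : Finset G) : Set G) := by
      have : (1 : G) ∈ (Subgroup.closure ((ℋ : Finset G) : Set G) : Set G) := one_mem _
      rw [← heq] at this; exact this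
    exact Subsemigroup.closure_mono (by exact_mod_cast hsub) h1
end

section
/- Let d = gcd(b_i, |b_j|) where b_i > 0 and b_j < 0. In the group ℚ(X) ⋊ ℤ of pairs (y, b) with y ∈ ℚ(X), b ∈ ℤ and multiplication (y,b)·(y',b') = (y + X^b y', b+b'), define h = y_i/(1 + X^d + ⋯ + X^{b_i−d}) + y_j/(X^{−d} + X^{−2d} + ⋯ + X^{−|b_j|}). Then (y_i, b_i)^{|b_j|} · (y_j, b_j)^{b_i} = (h · (1 + X^d + ⋯ + X^{b_i|b_j|−d}), 0). -/
/-- Multiplication of the group `ℚ(X) ⋊ ℤ` on pairs `(y, b)`, `y ∈ ℚ(X)`, `b ∈ ℤ`: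
`(y,b)·(y',b') = (y + X^b y', b+b')`. -/
noncomputable def qmul (p q : RatFunc ℚ × ℤ) : RatFunc ℚ × ℤ :=
  (p.1 + RatFunc.X ^ p.2 * q.1, p.2 + q.2)

/-- `n`-th power in `ℚ(X) ⋊ ℤ`. -/
noncomputable def qpow (a : RatFunc ℚ × ℤ) : ℕ → RatFunc ℚ × ℤ
  | 0 => (0, 0)
  | n + 1 => qmul a (qpow a n)

lemma intDeg_X_pow (n : ℕ) : ((RatFunc.X : RatFunc ℚ)^n).intDegree = n := by
  induction n with
  | zero => simp [RatFunc.intDegree_one]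
  | succ n ih =>
      rw [pow_succ, RatFunc.intDegree_mul (pow_ne_zero _ RatFunc.X_ne_zero) RatFunc.X_ne_zero,
        ih, RatFunc.intDegree_X]
      push_cast; ring

lemma X_pow_ne_one {n : ℕ} (hn : 0 < n) : (RatFunc.X : RatFunc ℚ)^n ≠ 1 := by
  intro h
  have := congrArg RatFunc.intDegree h
  rw [intDeg_X_pow, RatFunc.intDegree_one] at this
  omega

lemma qpow_eq (y : RatFunc ℚ) (b : ℤ) (n : ℕ) :
    qpow (y, b) n = (y * ∑ k ∈ Finset.range n, (RatFunc.X ^ b) ^ k, (n : ℤ) * b) := by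
  induction n with
  | zero => simp [qpow]
  | succ n ih =>
      rw [qpow, ih, qmul]
      refine Prod.ext ?_ ?_
      · simp only
        rw [geom_sum_succ]
        ring
      · simp only
        push_cast
        ring

lemma inv_geom_succ {α : Type*} [Field α] {x : α} (hx : x ≠ 0) (n : ℕ) :
    ∑ k ∈ Finset.range n, (x⁻¹) ^ (k + 1) = (∑ k ∈ Finset.range n, x ^ k) / x ^ n := by
  rw [Finset.sum_div, ← Finset.sum_range_reflect]
  refine Finset.sum_congr rfl fun k hk => ?_
  rw [Finset.mem_range] at hk
  rw [inv_pow, eq_div_iff (pow_ne_zero n hx), inv_mul_eq_iff_eq_mul₀ (pow_ne_zero _ hx),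
    ← pow_add]
  congr 1
  omega

lemma inv_geom {α : Type*} [Field α] {x : α} (hx : x ≠ 0) (n : ℕ) :
    ∑ k ∈ Finset.range n, (x⁻¹) ^ k = x * (∑ k ∈ Finset.range n, x ^ k) / x ^ n := by
  have h : ∑ k ∈ Finset.range n, (x⁻¹) ^ k = x * ∑ k ∈ Finset.range n, (x⁻¹) ^ (k + 1) := by
    rw [Finset.mul_sum]
    refine Finset.sum_congr rfl fun k _ => ?_
    rw [pow_succ', ← mul_assoc, mul_inv_cancel₀ hx, one_mul]
  rw [h, inv_geom_succ hx, mul_div_assoc]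

/-- With `d = gcd(b_i, |b_j|)`, `b_i > 0 > b_j`, and
`h = y_i/(1 + X^d + ⋯ + X^{b_i−d}) + y_j/(X^{−d} + X^{−2d} + ⋯ + X^{−|b_j|})`, we have
`(y_i, b_i)^{|b_j|} · (y_j, b_j)^{b_i} = (h·(1 + X^d + ⋯ + X^{b_i|b_j|−d}), 0)`. -/
theorem stmt4 (yi yj : RatFunc ℚ) (bi bj : ℤ) (hbi : 0 < bi) (hbj : bj < 0)
    (d : ℤ) (hd : d = (Int.gcd bi bj : ℤ)) :
    qmul (qpow (yi, bi) (-bj).toNat) (qpow (yj, bj) bi.toNat) =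
      ((yi / (∑ k ∈ Finset.range (bi / d).toNat, RatFunc.X ^ ((k : ℤ) * d)) +
        yj / (∑ k ∈ Finset.range ((-bj) / d).toNat, RatFunc.X ^ (-((k : ℤ) + 1) * d))) *
        (∑ k ∈ Finset.range ((bi * (-bj)) / d).toNat, RatFunc.X ^ ((k : ℤ) * d)), 0) := by
  have hd0 : 0 < d := by
    rw [hd]
    exact_mod_cast Nat.pos_of_ne_zero fun h => hbi.ne' (Int.gcd_eq_zero_iff.mp h).1
  have hdi : d ∣ bi := hd ▸ Int.gcd_dvd_left bi bj
  have hdj : d ∣ -bj := Dvd.dvd.neg_right (hd ▸ Int.gcd_dvd_right bi bj)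
  obtain ⟨e, he⟩ := hdi
  obtain ⟨f, hf⟩ := hdj
  have he0 : 0 < e := by nlinarith
  have hf0 : 0 < f := by nlinarith
  obtain ⟨dn, hdc⟩ : ∃ n : ℕ, d = (n : ℤ) := ⟨d.toNat, by omega⟩
  obtain ⟨en, hec⟩ : ∃ n : ℕ, e = (n : ℤ) := ⟨e.toNat, by omega⟩
  obtain ⟨fn, hfc⟩ : ∃ n : ℕ, f = (n : ℤ) := ⟨f.toNat, by omega⟩
  have hdn0 : 0 < dn := by omega
  have hen0 : 0 < en := by omega
  have hfn0 : 0 < fn := by omega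
  have hbi_eq : bi = ((dn * en : ℕ) : ℤ) := by rw [he, hdc, hec]; push_cast; ring
  have hbj_eq : bj = -((dn * fn : ℕ) : ℤ) := by
    have : -bj = ((dn * fn : ℕ) : ℤ) := by rw [hf, hdc, hfc]; push_cast; ring
    omega
  -- indices
  have i1 : (bi / d).toNat = en := by
    have : bi / d = (en : ℤ) := by rw [he, Int.mul_ediv_cancel_left _ hd0.ne', hec]
    omega
  have i2 : ((-bj) / d).toNat = fn := by
    have : (-bj) / d = (fn : ℤ) := by rw [hf, Int.mul_ediv_cancel_left _ hd0.ne', hfc]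
    omega
  have i3 : ((bi * (-bj)) / d).toNat = en * (dn * fn) := by
    have h1 : bi * (-bj) = d * (e * (d * f)) := by rw [he, hf]; ring
    have : (bi * (-bj)) / d = ((en * (dn * fn) : ℕ) : ℤ) := by
      rw [h1, Int.mul_ediv_cancel_left _ hd0.ne', hec, hdc, hfc]; push_cast; ring
    omega
  have i4 : (-bj).toNat = dn * fn := by omega
  have i5 : bi.toNat = dn * en := by omega
  rw [qpow_eq, qpow_eq, qmul, i1, i2, i3, i4, i5]
  refine Prod.ext ?_ ?_
  · simp only
    set r : RatFunc ℚ := RatFunc.X ^ dn with hr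
    have hX0 : (RatFunc.X : RatFunc ℚ) ≠ 0 := RatFunc.X_ne_zero
    have hr0 : r ≠ 0 := pow_ne_zero _ hX0
    have hr1 : r ≠ 1 := X_pow_ne_one hdn0
    have hren1 : r ^ en ≠ 1 := by rw [hr, ← pow_mul]; exact X_pow_ne_one (by positivity)
    have hrfn1 : r ^ fn ≠ 1 := by rw [hr, ← pow_mul]; exact X_pow_ne_one (by positivity)
    have hrfninv1 : (r ^ fn)⁻¹ ≠ 1 := fun h => hrfn1 (inv_eq_one.mp h)
    have hrinv1 : r⁻¹ ≠ 1 := fun h => hr1 (inv_eq_one.mp h)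
    have eXbi : (RatFunc.X : RatFunc ℚ) ^ bi = r ^ en := by
      rw [hbi_eq, zpow_natCast, pow_mul]
    have eXbj : (RatFunc.X : RatFunc ℚ) ^ bj = (r ^ fn)⁻¹ := by
      rw [hbj_eq, zpow_neg, zpow_natCast, pow_mul]
    have eXbig : (RatFunc.X : RatFunc ℚ) ^ (((dn * fn : ℕ) : ℤ) * bi) = r ^ (en * (dn * fn)) := by
      have : ((dn * fn : ℕ) : ℤ) * bi = ((dn * (en * (dn * fn)) : ℕ) : ℤ) := by
        rw [hbi_eq]; push_cast; ring
      rw [this, zpow_natCast, pow_mul]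
    have eA : ∀ n : ℕ, (∑ k ∈ Finset.range n, (RatFunc.X : RatFunc ℚ) ^ ((k : ℤ) * d)) =
        ∑ k ∈ Finset.range n, r ^ k := by
      intro n
      refine Finset.sum_congr rfl fun k _ => ?_
      rw [show (k : ℤ) * d = ((k * dn : ℕ) : ℤ) by rw [hdc]; push_cast; ring,
        zpow_natCast, pow_mul']
    have eB : (∑ k ∈ Finset.range fn, (RatFunc.X : RatFunc ℚ) ^ (-((k : ℤ) + 1) * d)) =
        ∑ k ∈ Finset.range fn, (r⁻¹) ^ (k + 1) := by
      refine Finset.sum_congr rfl fun k _ => ?_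
      rw [show -((k : ℤ) + 1) * d = -(((k + 1) * dn : ℕ) : ℤ) by rw [hdc]; push_cast; ring,
        zpow_neg, zpow_natCast, pow_mul', inv_pow]
    rw [eXbi, eXbj, eXbig, eA, eA, eB, inv_geom_succ hr0,
      inv_geom (pow_ne_zero fn hr0),
      geom_sum_eq hren1, geom_sum_eq hrfn1, geom_sum_eq hr1, geom_sum_eq hr1,
      geom_sum_eq hr1]
    have h1 : r - 1 ≠ 0 := sub_ne_zero.mpr hr1
    have h2 : r ^ en - 1 ≠ 0 := sub_ne_zero.mpr hren1
    have h3 : r ^ fn - 1 ≠ 0 := sub_ne_zero.mpr hrfn1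
    field_simp
    ring
  · simp only
    rw [hbi_eq, hbj_eq]
    push_cast
    ring
end

section
/- Let f be a nonzero Laurent polynomial with nonnegative real coefficients, and let M, N be positive integers. Then for all sufficiently large n, every coefficient of X^k in (X^{−M} + X^{−M+1} + ⋯ + X^N)^n · f is strictly positive for all k between the negative degree and positive degree of this product (i.e., the product is gap-free). -/
open LaurentPolynomial

private lemma lp_mul_nonneg {a b : LaurentPolynomial ℝ}
    (ha : ∀ k, 0 ≤ a.coeff k) (hb : ∀ k, 0 ≤ b.coeff k) (k : ℤ) : 0 ≤ (a * b).coeff k := by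
  rw [AddMonoidAlgebra.mul_apply]
  refine Finset.sum_nonneg fun i _ => Finset.sum_nonneg fun j _ => ?_
  dsimp only
  split
  · exact mul_nonneg (ha i) (hb j)
  · exact le_refl 0

private lemma lp_mul_exists {a b : LaurentPolynomial ℝ} {k : ℤ}
    (h : (a * b).coeff k ≠ 0) : ∃ i j : ℤ, i + j = k ∧ a.coeff i ≠ 0 ∧ b.coeff j ≠ 0 := by
  rw [AddMonoidAlgebra.mul_apply] at h
  obtain ⟨i, hi, h1⟩ := Finset.exists_ne_zero_of_sum_ne_zero h
  obtain ⟨j, hj, h2⟩ := Finset.exists_ne_zero_of_sum_ne_zero h1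
  refine ⟨i, j, ?_, Finsupp.mem_support_iff.1 hi, Finsupp.mem_support_iff.1 hj⟩
  by_contra hk
  simp [hk] at h2

private lemma lp_mul_ge {a b : LaurentPolynomial ℝ}
    (ha : ∀ k, 0 ≤ a.coeff k) (hb : ∀ k, 0 ≤ b.coeff k) (i j : ℤ) :
    a.coeff i * b.coeff j ≤ (a * b).coeff (i + j) := by
  by_cases h1 : a.coeff i = 0
  · rw [h1, zero_mul]; exact lp_mul_nonneg ha hb _
  by_cases h2 : b.coeff j = 0
  · rw [h2, mul_zero]; exact lp_mul_nonneg ha hb _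
  rw [AddMonoidAlgebra.mul_apply]
  calc a.coeff i * b.coeff j = if i + j = i + j then a.coeff i * b.coeff j else 0 := by simp
    _ ≤ ∑ j' ∈ b.coeff.support, if i + j' = i + j then a.coeff i * b.coeff j' else 0 := by
        refine Finset.single_le_sum (f := fun j' => if i + j' = i + j then a.coeff i * b.coeff j' else 0)
          (fun j' _ => ?_) (Finsupp.mem_support_iff.2 h2)
        split
        · exact mul_nonneg (ha i) (hb j')
        · exact le_refl 0
    _ ≤ ∑ i' ∈ a.coeff.support, ∑ j' ∈ b.coeff.support, if i' + j' = i + j then a.coeff i' * b.coeff j' else 0 := by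
        refine Finset.single_le_sum
          (f := fun i' => ∑ j' ∈ b.coeff.support, if i' + j' = i + j then a.coeff i' * b.coeff j' else 0)
          (fun i' _ => Finset.sum_nonneg fun j' _ => ?_) (Finsupp.mem_support_iff.2 h1)
        split
        · exact mul_nonneg (ha i') (hb j')
        · exact le_refl 0
    _ = _ := rfl

private def Good (a : LaurentPolynomial ℝ) (p q : ℤ) : Prop :=
  p ≤ q ∧ (∀ k, 0 ≤ a.coeff k) ∧ (∀ k, a.coeff k ≠ 0 → p ≤ k ∧ k ≤ q) ∧ (∀ k, p ≤ k → k ≤ q → 0 < a.coeff k)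

private lemma good_mul {a b : LaurentPolynomial ℝ} {p₁ q₁ p₂ q₂ : ℤ}
    (hA : Good a p₁ q₁) (hB : Good b p₂ q₂) : Good (a * b) (p₁ + p₂) (q₁ + q₂) := by
  obtain ⟨hle1, hn1, hs1, hp1⟩ := hA
  obtain ⟨hle2, hn2, hs2, hp2⟩ := hB
  refine ⟨by omega, lp_mul_nonneg hn1 hn2, ?_, ?_⟩
  · intro k hk
    obtain ⟨i, j, hij, hi, hj⟩ := lp_mul_exists hk
    have := hs1 i hi; have := hs2 j hj; omega
  · intro k hk1 hk2
    set i : ℤ := max p₁ (k - q₂) with hi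
    have hi1 : p₁ ≤ i := le_max_left _ _
    have hi2 : i ≤ q₁ := by omega
    have hj1 : p₂ ≤ k - i := by omega
    have hj2 : k - i ≤ q₂ := by omega
    have hkey : a.coeff i * b.coeff (k - i) ≤ (a * b).coeff k := by
      have := lp_mul_ge hn1 hn2 i (k - i)
      simpa using this
    exact lt_of_lt_of_le (mul_pos (hp1 i hi1 hi2) (hp2 _ hj1 hj2)) hkey

private lemma lp_one_apply (k : ℤ) :
    (1 : LaurentPolynomial ℝ).coeff k = if (0 : ℤ) = k then 1 else 0 := by
  rw [AddMonoidAlgebra.one_def, AddMonoidAlgebra.coeff_single, Finsupp.single_apply]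

private lemma good_one : Good (1 : LaurentPolynomial ℝ) 0 0 := by
  refine ⟨le_refl 0, ?_, ?_, ?_⟩ <;> intro k <;> rw [lp_one_apply]
  · split <;> norm_num
  · intro h
    split at h
    · omega
    · exact absurd rfl h
  · intro h1 h2
    have : k = 0 := le_antisymm h2 h1
    subst this
    norm_num

private lemma good_pow {a : LaurentPolynomial ℝ} {p q : ℤ} (h : Good a p q) (n : ℕ) :
    Good (a ^ n) (n * p) (n * q) := by
  induction n with
  | zero => simpa using good_one
  | succ m ih =>
      have h2 := good_mul ih h
      rw [pow_succ] at *
      have e1 : ((m + 1 : ℕ) : ℤ) * p = (m : ℤ) * p + p := by push_cast; ring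
      have e2 : ((m + 1 : ℕ) : ℤ) * q = (m : ℤ) * q + q := by push_cast; ring
      rw [e1, e2]
      exact h2

private lemma good_geom (M N : ℕ) :
    Good ((∑ i ∈ Finset.range (M + N + 1), T ((i : ℤ) - (M : ℤ))) : LaurentPolynomial ℝ)
      (-(M : ℤ)) (N : ℤ) := by
  have happ : ∀ k : ℤ,
      ((∑ i ∈ Finset.range (M + N + 1), T ((i : ℤ) - (M : ℤ))) : LaurentPolynomial ℝ).coeff k
        = ∑ i ∈ Finset.range (M + N + 1), if ((i : ℤ) - (M : ℤ)) = k then (1 : ℝ) else 0 := by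
    intro k
    rw [AddMonoidAlgebra.coeff_sum, Finset.sum_apply']
    exact Finset.sum_congr rfl fun i _ => by rw [T_apply]
  refine ⟨by omega, ?_, ?_, ?_⟩
  · intro k
    rw [happ]
    refine Finset.sum_nonneg fun i _ => ?_
    split <;> norm_num
  · intro k hk
    rw [happ] at hk
    obtain ⟨i, hi, h1⟩ := Finset.exists_ne_zero_of_sum_ne_zero hk
    rw [Finset.mem_range] at hi
    split at h1
    · omega
    · simp at h1
  · intro k h1 h2
    rw [happ]
    have hi : (k + M).toNat ∈ Finset.range (M + N + 1) := by
      rw [Finset.mem_range]; omega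
    have he : (1 : ℝ) = if (((k + M).toNat : ℤ) - (M : ℤ)) = k then (1 : ℝ) else 0 := by
      rw [if_pos]; omega
    have h3 := Finset.single_le_sum
      (f := fun i : ℕ => if ((i : ℤ) - (M : ℤ)) = k then (1 : ℝ) else 0)
      (fun i _ => by split <;> norm_num) hi
    rw [if_pos (show (((k + M).toNat : ℤ) - (M : ℤ)) = k by omega)] at h3
    linarith

/-- Let `f` be a nonzero Laurent polynomial with nonnegative real coefficients and
`M, N > 0`. For all large enough `n`, the product `(X^{−M} + X^{−M+1} + ⋯ + X^N)^n · f`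
is gap-free: every coefficient between two nonzero coefficients is strictly positive. -/
theorem stmt7 (f : LaurentPolynomial ℝ) (hf : f ≠ 0) (hpos : ∀ k : ℤ, 0 ≤ f.coeff k)
    (M N : ℕ) (hM : 0 < M) (hN : 0 < N) :
    ∃ n₀ : ℕ, ∀ n ≥ n₀,
      ∀ p q k : ℤ,
        (((∑ i ∈ Finset.range (M + N + 1), T ((i : ℤ) - (M : ℤ))) : LaurentPolynomial ℝ) ^ n
            * f).coeff p ≠ 0 →
        (((∑ i ∈ Finset.range (M + N + 1), T ((i : ℤ) - (M : ℤ))) : LaurentPolynomial ℝ) ^ n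
            * f).coeff q ≠ 0 →
        p ≤ k → k ≤ q →
        0 < (((∑ i ∈ Finset.range (M + N + 1), T ((i : ℤ) - (M : ℤ))) : LaurentPolynomial ℝ) ^ n
            * f).coeff k := by
  set g : LaurentPolynomial ℝ := ∑ i ∈ Finset.range (M + N + 1), T ((i : ℤ) - (M : ℤ)) with hg
  have hsupp : f.coeff.support.Nonempty := Finsupp.support_nonempty_iff.2 (mt AddMonoidAlgebra.coeff_eq_zero.1 hf)
  set p₀ : ℤ := f.coeff.support.min' hsupp with hp₀
  set q₀ : ℤ := f.coeff.support.max' hsupp with hq₀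
  have hfp : f.coeff p₀ ≠ 0 := Finsupp.mem_support_iff.1 (f.coeff.support.min'_mem hsupp)
  have hfq : f.coeff q₀ ≠ 0 := Finsupp.mem_support_iff.1 (f.coeff.support.max'_mem hsupp)
  have hfs : ∀ a : ℤ, f.coeff a ≠ 0 → p₀ ≤ a ∧ a ≤ q₀ := fun a ha =>
    ⟨f.coeff.support.min'_le a (Finsupp.mem_support_iff.2 ha),
     f.coeff.support.le_max' a (Finsupp.mem_support_iff.2 ha)⟩
  have hpq : p₀ ≤ q₀ := (hfs p₀ hfp).2
  refine ⟨(q₀ - p₀).toNat, fun n hn p q k hp hq hpk hkq => ?_⟩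
  have hn' : q₀ - p₀ ≤ (n : ℤ) := by
    have := Int.toNat_le.1 (le_refl (q₀ - p₀).toNat)
    omega
  obtain ⟨_, hgn, hgs, hgp⟩ := good_pow (good_geom M N) n
  -- bounds on p and q
  obtain ⟨i, j, hij, hi, hj⟩ := lp_mul_exists hp
  obtain ⟨i', j', hij', hi', hj'⟩ := lp_mul_exists hq
  have hib := hgs i hi
  have hib' := hgs i' hi'
  have hjb := hfs j hj
  have hjb' := hfs j' hj'
  have hnM : (n : ℤ) ≤ (n : ℤ) * (M : ℤ) := by
    have h1 : (1 : ℤ) ≤ (M : ℤ) := by exact_mod_cast hM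
    nlinarith [Int.ofNat_nonneg n]
  have hnN : (0 : ℤ) ≤ (n : ℤ) * (N : ℤ) := by positivity
  have hkl : (n : ℤ) * (-(M : ℤ)) + p₀ ≤ k := by linarith [hpk, hij ▸ le_refl p]
  have hku : k ≤ (n : ℤ) * (N : ℤ) + q₀ := by linarith [hkq, hij' ▸ le_refl q]
  by_cases hc : k ≤ p₀ + (n : ℤ) * (N : ℤ)
  · have hg1 : 0 < (g ^ n).coeff (k - p₀) := hgp _ (by linarith) (by linarith)
    have hg2 : 0 < f.coeff p₀ := lt_of_le_of_ne (hpos p₀) (Ne.symm hfp)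
    have hle := lp_mul_ge hgn hpos (k - p₀) p₀
    rw [sub_add_cancel] at hle
    exact lt_of_lt_of_le (mul_pos hg1 hg2) hle
  · have hg1 : 0 < (g ^ n).coeff (k - q₀) := hgp _ (by linarith) (by linarith)
    have hg2 : 0 < f.coeff q₀ := lt_of_le_of_ne (hpos q₀) (Ne.symm hfq)
    have hle := lp_mul_ge hgn hpos (k - q₀) q₀
    rw [sub_add_cancel] at hle
    exact lt_of_lt_of_le (mul_pos hg1 hg2) hle
end

section
/- Let f ∈ ℝ[X^{±}] be a Laurent polynomial such that f(r) > 0 for all real r > 0, and such that both the positive leading coefficient lc₊(f) and the negative leading coefficient lc₋(f) are strictly positive. Then there exists a nonzero Laurent polynomial g with nonnegative coefficients such that f·g has nonnegative coefficients (and is nonzero). -/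
open LaurentPolynomial

/-- Evaluation of a real Laurent polynomial at a (positive) real number. -/
noncomputable def evalAt (f : LaurentPolynomial ℝ) (r : ℝ) : ℝ :=
  f.coeff.support.sum fun k => f.coeff k * r ^ k

open Finset Polynomial

lemma prod_bound (t E : ℝ) (ht : 0 ≤ t) (hE : 0 ≤ E) (u : ℕ → ℝ) (k : ℕ)
    (hu : ∀ j < k, 0 ≤ u j ∧ u j ≤ t ∧ t - u j ≤ E) :
    (0 ≤ ∏ j ∈ range k, u j) ∧ (∏ j ∈ range k, u j ≤ t ^ k) ∧
      (t ^ k - ∏ j ∈ range k, u j ≤ k * t ^ (k - 1) * E) := by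
  induction k with
  | zero => simp
  | succ k ih =>
    obtain ⟨h0, h1, h2⟩ := ih (fun j hj => hu j (Nat.lt_succ_of_lt hj))
    obtain ⟨hu0, hu1, hu2⟩ := hu k (Nat.lt_succ_self k)
    rw [prod_range_succ]
    refine ⟨mul_nonneg h0 hu0, ?_, ?_⟩
    · calc (∏ j ∈ range k, u j) * u k ≤ t ^ k * t :=
            mul_le_mul h1 hu1 hu0 (pow_nonneg ht k)
        _ = t ^ (k + 1) := by ring
    · have key : t ^ (k+1) - (∏ j ∈ range k, u j) * u k
          = t * (t ^ k - ∏ j ∈ range k, u j) + (∏ j ∈ range k, u j) * (t - u k) := by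
        ring
      rw [key]
      have b1 : t * (t ^ k - ∏ j ∈ range k, u j) ≤ t * (k * t ^ (k-1) * E) :=
        mul_le_mul_of_nonneg_left h2 ht
      have b2 : (∏ j ∈ range k, u j) * (t - u k) ≤ t ^ k * E := by
        calc (∏ j ∈ range k, u j) * (t - u k) ≤ (∏ j ∈ range k, u j) * E :=
              mul_le_mul_of_nonneg_left hu2 h0
          _ ≤ t ^ k * E := mul_le_mul_of_nonneg_right h1 hE
      have b3 : t * ((k : ℝ) * t ^ (k-1) * E) = k * t ^ k * E := by
        rcases Nat.eq_zero_or_pos k with hk | hk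
        · simp [hk]
        · have ht' : t * t ^ (k - 1) = t ^ k := by
            rw [← pow_succ']
            congr 1
            omega
          calc t * ((k : ℝ) * t ^ (k-1) * E) = (k : ℝ) * (t * t ^ (k-1)) * E := by ring
            _ = (k : ℝ) * t ^ k * E := by rw [ht']
      calc t * (t ^ k - ∏ j ∈ range k, u j) + (∏ j ∈ range k, u j) * (t - u k)
          ≤ (k : ℝ) * t ^ k * E + t ^ k * E := add_le_add (b1.trans_eq b3) b2
        _ = (↑(k + 1) : ℝ) * t ^ (k + 1 - 1) * E := by
            simp only [Nat.add_sub_cancel]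
            push_cast
            ring

lemma choose_ratio {N i k : ℕ} (hiN : i ≤ N) (hki : k ≤ i) :
    ((N.choose (i - k) : ℝ)) * ∏ j ∈ range k, ((N - i + 1 + j : ℕ) : ℝ)
      = (N.choose i : ℝ) * ∏ j ∈ range k, ((i - j : ℕ) : ℝ) := by
  induction k with
  | zero => simp
  | succ k ih =>
    have hki' : k ≤ i := Nat.le_of_succ_le hki
    rw [prod_range_succ, prod_range_succ]
    have key : (N.choose (i - (k+1)) : ℝ) * ((N - i + 1 + k : ℕ) : ℝ)
        = (N.choose (i - k) : ℝ) * ((i - k : ℕ) : ℝ) := by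
      have h1 : i - (k+1) + 1 = i - k := by omega
      have h2 : N - (i - (k+1)) = N - i + 1 + k := by omega
      have := Nat.choose_succ_right_eq N (i - (k+1))
      rw [h1, h2] at this
      exact_mod_cast congrArg (Nat.cast : ℕ → ℝ) this.symm
    calc (N.choose (i - (k+1)) : ℝ) * ((∏ j ∈ range k, ((N - i + 1 + j : ℕ) : ℝ)) * ((N - i + 1 + k : ℕ) : ℝ))
        = ((N.choose (i - (k+1)) : ℝ) * ((N - i + 1 + k : ℕ) : ℝ)) * ∏ j ∈ range k, ((N - i + 1 + j : ℕ) : ℝ) := by ring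
      _ = ((N.choose (i - k) : ℝ) * ((i - k : ℕ) : ℝ)) * ∏ j ∈ range k, ((N - i + 1 + j : ℕ) : ℝ) := by rw [key]
      _ = ((N.choose (i - k) : ℝ) * ∏ j ∈ range k, ((N - i + 1 + j : ℕ) : ℝ)) * ((i - k : ℕ) : ℝ) := by ring
      _ = ((N.choose i : ℝ) * ∏ j ∈ range k, ((i - j : ℕ) : ℝ)) * ((i - k : ℕ) : ℝ) := by rw [ih hki']
      _ = (N.choose i : ℝ) * ((∏ j ∈ range k, ((i - j : ℕ) : ℝ)) * ((i - k : ℕ) : ℝ)) := by ring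

set_option maxHeartbeats 1000000 in
lemma per_index (d : ℕ) (a : ℕ → ℝ) (ha : ∀ k, d < k → a k = 0)
    (δ : ℝ) (hδ : 0 < δ)
    (hp : ∀ t : ℝ, 0 ≤ t → δ * (1+t)^d ≤ ∑ k ∈ range (d+1), a k * t ^ k)
    (N i : ℕ) (hiN : i ≤ N)
    (hB : (d : ℝ) * (∑ k ∈ range (d+1), |a k| * k) ≤ δ * ((N - i + 1 : ℕ) : ℝ)) :
    0 ≤ ∑ k ∈ range (i+1), a k * (N.choose (i - k) : ℝ) := by
  set n₁ : ℕ := N - i + 1 with hn₁def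
  have hn₁pos : 0 < ((n₁ : ℕ) : ℝ) := by positivity
  have hn₁N : (n₁ : ℝ) ≤ (N : ℝ) + 1 := by
    have : n₁ ≤ N + 1 := by omega
    exact_mod_cast this
  have hin₁ : ((i : ℝ)) + (n₁ : ℝ) = (N : ℝ) + 1 := by
    have : i + n₁ = N + 1 := by omega
    exact_mod_cast this
  set t : ℝ := (i : ℝ) / (n₁ : ℝ) with htdef
  set E : ℝ := (d : ℝ) * ((N : ℝ) + 1) / (n₁ : ℝ)^2 with hEdef
  set u : ℕ → ℝ := fun j => ((i - j : ℕ) : ℝ) / ((N - i + 1 + j : ℕ) : ℝ) with hudef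
  have hDpos : ∀ j : ℕ, 0 < ((N - i + 1 + j : ℕ) : ℝ) := by
    intro j; positivity
  have ht : 0 ≤ t := by positivity
  have hE : 0 ≤ E := by positivity
  have h1t : 1 + t = ((N : ℝ) + 1) / (n₁ : ℝ) := by
    rw [htdef]
    field_simp
    linarith [hin₁]
  -- properties of u
  have hu : ∀ k ≤ d, ∀ j < k, 0 ≤ u j ∧ u j ≤ t ∧ t - u j ≤ E := by
    intro k hkd j hjk
    have hjd : j < d := lt_of_lt_of_le hjk hkd
    have hden := hDpos j
    refine ⟨by positivity, ?_, ?_⟩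
    · rw [hudef]
      rw [div_le_div_iff₀ hden hn₁pos]
      have : (i - j) * n₁ ≤ i * (N - i + 1 + j) := by
        calc (i - j) * n₁ ≤ i * n₁ := Nat.mul_le_mul_right _ (Nat.sub_le i j)
          _ ≤ i * (N - i + 1 + j) := Nat.mul_le_mul_left _ (by omega)
      calc ((i - j : ℕ) : ℝ) * (n₁ : ℝ) = (((i - j) * n₁ : ℕ) : ℝ) := by push_cast; ring
        _ ≤ ((i * (N - i + 1 + j) : ℕ) : ℝ) := by exact_mod_cast this
        _ = (i : ℝ) * ((N - i + 1 + j : ℕ) : ℝ) := by push_cast; ring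
    · by_cases hji : j ≤ i
      · have hcast : ((i - j : ℕ) : ℝ) = (i : ℝ) - (j : ℝ) := by
          exact Nat.cast_sub hji
        have hDcast : ((N - i + 1 + j : ℕ) : ℝ) = (n₁ : ℝ) + (j : ℝ) := by
          push_cast [hn₁def]; ring
        have h2 : (0:ℝ) < (n₁ : ℝ) + (j : ℝ) := by positivity
        have heq : t - u j = ((j : ℝ) * ((N:ℝ)+1)) / ((n₁ : ℝ) * ((n₁ : ℝ) + (j : ℝ))) := by
          rw [htdef, hudef]
          simp only
          rw [hcast, hDcast]
          rw [div_sub_div _ _ (ne_of_gt hn₁pos) (ne_of_gt h2)]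
          congr 1
          linear_combination (j:ℝ) * hin₁
        rw [heq]
        rw [hEdef]
        apply div_le_div₀ (by positivity) ?_ (by positivity) ?_
        · have : (j : ℝ) ≤ (d : ℝ) := by exact_mod_cast hjd.le
          nlinarith
        · nlinarith [hn₁pos, (Nat.cast_nonneg j : (0:ℝ) ≤ j)]
      · push_neg at hji
        have hizero : (i - j : ℕ) = 0 := by omega
        have hu0 : u j = 0 := by rw [hudef]; simp [hizero]
        rw [hu0, sub_zero, htdef, hEdef]
        have hid : (i : ℝ) < (d : ℝ) := by
          have : i < d := by omega
          exact_mod_cast this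
        rw [div_le_div_iff₀ hn₁pos (by positivity)]
        have hi1 : (i:ℝ) * (n₁:ℝ) ≤ (d:ℝ) * ((N:ℝ)+1) :=
          mul_le_mul hid.le hn₁N (le_of_lt hn₁pos) (by positivity)
        calc (i:ℝ) * (n₁:ℝ)^2 = ((i:ℝ) * (n₁:ℝ)) * (n₁:ℝ) := by ring
          _ ≤ ((d:ℝ) * ((N:ℝ)+1)) * (n₁:ℝ) :=
              mul_le_mul_of_nonneg_right hi1 (le_of_lt hn₁pos)
          _ = (d:ℝ) * ((N:ℝ)+1) * (n₁:ℝ) := by ring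
  -- the products
  set r : ℕ → ℝ := fun k => ∏ j ∈ range k, u j with hrdef
  have hrzero : ∀ k, i < k → r k = 0 := by
    intro k hik
    rw [hrdef]
    apply Finset.prod_eq_zero (Finset.mem_range.mpr hik)
    rw [hudef]
    simp [Nat.sub_self]
  have hchoose : ∀ k ≤ i, (N.choose (i - k) : ℝ) = (N.choose i : ℝ) * r k := by
    intro k hki
    have h := choose_ratio hiN hki
    have hprodpos : 0 < ∏ j ∈ range k, ((N - i + 1 + j : ℕ) : ℝ) :=
      Finset.prod_pos fun j _ => hDpos j
    have : r k = (∏ j ∈ range k, ((i - j : ℕ) : ℝ)) / (∏ j ∈ range k, ((N - i + 1 + j : ℕ) : ℝ)) := by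
      rw [hrdef, hudef]
      simp only
      rw [← Finset.prod_div_distrib]
    rw [this, mul_div_assoc', eq_div_iff (ne_of_gt hprodpos)]
    linarith [h]
  -- rewrite the sum
  have step1 : ∑ k ∈ range (i+1), a k * (N.choose (i - k) : ℝ)
      = (N.choose i : ℝ) * ∑ k ∈ range (i+1), a k * r k := by
    rw [Finset.mul_sum]
    apply Finset.sum_congr rfl
    intro k hk
    rw [hchoose k (Nat.lt_succ_iff.mp (Finset.mem_range.mp hk))]
    ring
  have step2 : ∑ k ∈ range (i+1), a k * r k = ∑ k ∈ range (d+1), a k * r k := by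
    rcases le_total i d with hid | hdi
    · apply Finset.sum_subset (Finset.range_subset_range.mpr (by omega))
      intro k _ hk
      have : i < k := by
        simp only [Finset.mem_range] at hk
        omega
      rw [hrzero k this]
      ring
    · symm
      apply Finset.sum_subset (Finset.range_subset_range.mpr (by omega))
      intro k _ hk
      have : d < k := by
        simp only [Finset.mem_range] at hk
        omega
      rw [ha k this]
      ring
  rw [step1, step2]
  apply mul_nonneg (by positivity)
  -- now the analytic estimate
  set A : ℝ := ∑ k ∈ range (d+1), |a k| * k with hAdef
  have hA : 0 ≤ A := Finset.sum_nonneg fun k _ => by positivity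
  have key : ∀ k ∈ range (d+1),
      a k * t ^ k - |a k| * (k * t ^ (k-1) * E) ≤ a k * r k := by
    intro k hk
    have hkd : k ≤ d := Nat.lt_succ_iff.mp (Finset.mem_range.mp hk)
    obtain ⟨h0, h1, h2⟩ := prod_bound t E ht hE u k (hu k hkd)
    have h0' : 0 ≤ r k := h0
    have h1' : r k ≤ t ^ k := h1
    have h2' : t ^ k - r k ≤ k * t ^ (k-1) * E := h2
    have habs : a k * (t ^ k - r k) ≤ |a k| * (k * t ^ (k-1) * E) := by
      calc a k * (t ^ k - r k) ≤ |a k * (t ^ k - r k)| := le_abs_self _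
        _ = |a k| * (t ^ k - r k) := by
            rw [abs_mul, abs_of_nonneg (show (0:ℝ) ≤ t ^ k - r k by linarith)]
        _ ≤ |a k| * (k * t ^ (k-1) * E) :=
            mul_le_mul_of_nonneg_left h2' (abs_nonneg _)
    linarith
  have sum_ge : ∑ k ∈ range (d+1), a k * r k
      ≥ δ * (1+t)^d - E * ((1+t)^(d-1) * A) := by
    have hs1 : ∑ k ∈ range (d+1), a k * r k
        ≥ ∑ k ∈ range (d+1), (a k * t ^ k - |a k| * (k * t ^ (k-1) * E)) :=
      Finset.sum_le_sum key
    have hs2 : ∑ k ∈ range (d+1), (a k * t ^ k - |a k| * (k * t ^ (k-1) * E))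
        = (∑ k ∈ range (d+1), a k * t ^ k) - E * ∑ k ∈ range (d+1), |a k| * k * t ^ (k-1) := by
      rw [Finset.sum_sub_distrib, Finset.mul_sum]
      congr 1
      apply Finset.sum_congr rfl
      intro k _
      ring
    have hs3 : ∑ k ∈ range (d+1), |a k| * k * t ^ (k-1) ≤ (1+t)^(d-1) * A := by
      rw [hAdef, Finset.mul_sum]
      apply Finset.sum_le_sum
      intro k hk
      have hkd : k ≤ d := Nat.lt_succ_iff.mp (Finset.mem_range.mp hk)
      have htle : t ^ (k-1) ≤ (1+t)^(d-1) := by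
        calc t ^ (k-1) ≤ (1+t)^(k-1) := pow_le_pow_left₀ ht (by linarith) _
          _ ≤ (1+t)^(d-1) := pow_le_pow_right₀ (by linarith) (by omega)
      calc |a k| * k * t ^ (k-1) ≤ |a k| * k * (1+t)^(d-1) := by
            apply mul_le_mul_of_nonneg_left htle (by positivity)
        _ = (1+t)^(d-1) * (|a k| * k) := by ring
    have := hp t ht
    have hfin : E * ∑ k ∈ range (d+1), |a k| * k * t ^ (k-1) ≤ E * ((1+t)^(d-1) * A) :=
      mul_le_mul_of_nonneg_left hs3 hE
    linarith
  have last : E * ((1+t)^(d-1) * A) ≤ δ * (1+t)^d := by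
    rcases Nat.eq_zero_or_pos d with hd0 | hdpos
    · have : E = 0 := by rw [hEdef, hd0]; simp
      rw [this]
      simp only [zero_mul]
      positivity
    · have hfact : (1+t)^d = (1+t)^(d-1) * (1+t) := by
        rw [← pow_succ]
        congr 1
        omega
      rw [hfact]
      have h1 : E * A ≤ δ * (1+t) := by
        have hq : E * A = ((d:ℝ) * A) * (((N:ℝ)+1) / (n₁:ℝ)^2) := by rw [hEdef]; ring
        have hq2 : δ * (1+t) = (δ * (n₁:ℝ)) * (((N:ℝ)+1) / (n₁:ℝ)^2) := by
          rw [h1t]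
          field_simp
        rw [hq, hq2]
        exact mul_le_mul_of_nonneg_right hB (by positivity)
      calc E * ((1+t)^(d-1) * A) = (E * A) * (1+t)^(d-1) := by ring
        _ ≤ (δ * (1+t)) * (1+t)^(d-1) := by
            apply mul_le_mul_of_nonneg_right h1 (by positivity)
        _ = δ * ((1+t)^(d-1) * (1+t)) := by ring
  linarith [sum_ge, last]

lemma exists_delta (P : Polynomial ℝ) (d : ℕ) (hd : P.natDegree = d)
    (h0 : 0 < P.coeff 0) (hl : 0 < P.coeff d)
    (hpos : ∀ r : ℝ, 0 < r → 0 < P.eval r) :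
    ∃ δ : ℝ, 0 < δ ∧
      (∀ t : ℝ, 0 ≤ t → δ * (1+t)^d ≤ ∑ k ∈ range (d+1), P.coeff k * t ^ k) ∧
      (∀ t : ℝ, 0 ≤ t → δ * (1+t)^d ≤ ∑ k ∈ range (d+1), P.coeff (d - k) * t ^ k) := by
  set a : ℕ → ℝ := fun k => P.coeff k with hadef
  set q : ℝ → ℝ := fun s => ∑ k ∈ range (d+1), a k * s ^ k * (1-s) ^ (d-k) with hqdef
  have hqcont : Continuous q := by
    apply continuous_finset_sum
    intro k _
    exact (continuous_const.mul (continuous_pow k)).mul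
      ((continuous_const.sub continuous_id).pow _)
  have hevalsum : ∀ t : ℝ, P.eval t = ∑ k ∈ range (d+1), a k * t ^ k := by
    intro t
    rw [Polynomial.eval_eq_sum_range' (show P.natDegree < d + 1 by omega) t]
  have hqpos : ∀ s ∈ Set.Icc (0:ℝ) 1, 0 < q s := by
    rintro s ⟨hs0, hs1⟩
    rcases eq_or_lt_of_le hs1 with hs1' | hs1'
    · -- s = 1
      have hq1 : q 1 = a d := by
        rw [hqdef]
        simp only
        rw [Finset.sum_eq_single d]
        · simp
        · intro k hk hkd
          have : k < d := by
            simp only [Finset.mem_range] at hk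
            omega
          have : d - k ≠ 0 := by omega
          simp [this]
        · intro h
          exact absurd (Finset.self_mem_range_succ d) h
      rw [hs1', hq1]
      exact hl
    · -- s < 1
      have h1s : (0:ℝ) < 1 - s := by linarith
      have hqeq : q s = (1-s)^d * P.eval (s/(1-s)) := by
        rw [hevalsum, hqdef, Finset.mul_sum]
        apply Finset.sum_congr rfl
        intro k hk
        have hkd : k ≤ d := Nat.lt_succ_iff.mp (Finset.mem_range.mp hk)
        have hsplit : ((1:ℝ)-s)^d = (1-s)^(d-k) * (1-s)^k := (pow_sub_mul_pow _ hkd).symm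
        rw [div_pow, hsplit]
        field_simp
      rw [hqeq]
      refine mul_pos (by positivity) ?_
      rcases eq_or_lt_of_le hs0 with hs0' | hs0'
      · have : s / (1-s) = 0 := by rw [← hs0']; simp
        rw [this]
        simpa [Polynomial.coeff_zero_eq_eval_zero] using h0
      · exact hpos _ (by positivity)
  obtain ⟨s₀, hs₀mem, hs₀min⟩ := isCompact_Icc.exists_isMinOn
    (Set.nonempty_Icc.mpr (by norm_num : (0:ℝ) ≤ 1)) hqcont.continuousOn
  set δ : ℝ := q s₀ with hδdef
  have hδpos : 0 < δ := hqpos s₀ hs₀mem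
  have hmin : ∀ s ∈ Set.Icc (0:ℝ) 1, δ ≤ q s := fun s hs => hs₀min hs
  refine ⟨δ, hδpos, ?_, ?_⟩
  · intro t ht
    have h1t : (0:ℝ) < 1 + t := by linarith
    have hsm : t/(1+t) ∈ Set.Icc (0:ℝ) 1 := by
      constructor
      · positivity
      · rw [div_le_one h1t]; linarith
    have hq : (1+t)^d * q (t/(1+t)) = ∑ k ∈ range (d+1), a k * t ^ k := by
      rw [hqdef, Finset.mul_sum]
      apply Finset.sum_congr rfl
      intro k hk
      have hkd : k ≤ d := Nat.lt_succ_iff.mp (Finset.mem_range.mp hk)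
      have h1 : (1:ℝ) - t/(1+t) = 1/(1+t) := by field_simp; ring
      have hsplit : ((1:ℝ)+t)^d = (1+t)^k * (1+t)^(d-k) := (pow_mul_pow_sub _ hkd).symm
      rw [h1, div_pow, div_pow, one_pow, hsplit]
      field_simp
    calc δ * (1+t)^d ≤ q (t/(1+t)) * (1+t)^d := by
          apply mul_le_mul_of_nonneg_right (hmin _ hsm) (by positivity)
      _ = ∑ k ∈ range (d+1), a k * t ^ k := by rw [← hq]; ring
  · intro t ht
    have h1t : (0:ℝ) < 1 + t := by linarith
    have hsm : 1/(1+t) ∈ Set.Icc (0:ℝ) 1 := by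
      constructor
      · positivity
      · rw [div_le_one h1t]; linarith
    have hrefl : ∑ k ∈ range (d+1), a (d - k) * t ^ k
        = ∑ k ∈ range (d+1), a k * t ^ (d - k) := by
      rw [← Finset.sum_range_reflect]
      apply Finset.sum_congr rfl
      intro k hk
      have hkd : k ≤ d := Nat.lt_succ_iff.mp (Finset.mem_range.mp hk)
      have e1 : d + 1 - 1 - k = d - k := by omega
      have e2 : d - (d - k) = k := by omega
      rw [e1, e2]
    have hq : (1+t)^d * q (1/(1+t)) = ∑ k ∈ range (d+1), a k * t ^ (d - k) := by
      rw [hqdef, Finset.mul_sum]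
      apply Finset.sum_congr rfl
      intro k hk
      have hkd : k ≤ d := Nat.lt_succ_iff.mp (Finset.mem_range.mp hk)
      have h1 : (1:ℝ) - 1/(1+t) = t/(1+t) := by field_simp; ring
      have hsplit : ((1:ℝ)+t)^d = (1+t)^k * (1+t)^(d-k) := (pow_mul_pow_sub _ hkd).symm
      rw [h1, div_pow, div_pow, one_pow, hsplit]
      field_simp
    rw [hrefl]
    calc δ * (1+t)^d ≤ q (1/(1+t)) * (1+t)^d := by
          apply mul_le_mul_of_nonneg_right (hmin _ hsm) (by positivity)
      _ = ∑ k ∈ range (d+1), a k * t ^ (d-k) := by rw [← hq]; ring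

lemma reverse_one_add_X_pow (N : ℕ) : ((X + Polynomial.C 1 : ℝ[X]) ^ N).reverse = (X + Polynomial.C 1) ^ N := by
  have h1 : (1 : ℝ[X]).reverse = 1 := by
    rw [← Polynomial.C_1, Polynomial.reverse_C]
  have hX : (X : ℝ[X]).reverse = 1 := by
    have := Polynomial.reverse_mul_X (1 : ℝ[X])
    rwa [one_mul, h1] at this
  induction N with
  | zero => rw [pow_zero, h1]
  | succ n ih =>
    rw [pow_succ, Polynomial.reverse_mul_of_domain, ih]
    rw [Polynomial.reverse_add_C, hX, Polynomial.natDegree_X, pow_one, Polynomial.C_1, one_mul]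
    ring

lemma coeff_binom_mul (P : ℝ[X]) (N i : ℕ) :
    ((X + Polynomial.C 1 : ℝ[X]) ^ N * P).coeff i
      = ∑ k ∈ range (i+1), P.coeff k * (N.choose (i - k) : ℝ) := by
  rw [mul_comm, Polynomial.coeff_mul, Finset.Nat.sum_antidiagonal_eq_sum_range_succ_mk]
  apply Finset.sum_congr rfl
  intro k _
  congr 1
  rw [Polynomial.coeff_X_add_C_pow]
  simp

theorem poincare (P : ℝ[X]) (h0 : 0 < P.coeff 0)
    (hl : 0 < P.coeff P.natDegree)
    (hpos : ∀ r : ℝ, 0 < r → 0 < P.eval r) :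
    ∃ N : ℕ, ∀ i : ℕ, 0 ≤ ((X + Polynomial.C 1 : ℝ[X]) ^ N * P).coeff i := by
  set d := P.natDegree with hddef
  have hP0 : P ≠ 0 := fun h => by simp [h] at h0
  -- the reverse polynomial
  set Q := P.reverse with hQdef
  have hQdeg : Q.natDegree = d := by
    rw [hQdef, Polynomial.reverse_natDegree]
    have : P.natTrailingDegree = 0 := by
      rw [Polynomial.natTrailingDegree_eq_zero]
      exact Or.inr (ne_of_gt h0)
    omega
  have hQcoeff : ∀ k ≤ d, Q.coeff k = P.coeff (d - k) := by
    intro k hk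
    rw [hQdef, Polynomial.coeff_reverse, Polynomial.revAt_le hk]
  obtain ⟨δ, hδ, hpP, hpQ⟩ := exists_delta P d hddef h0 hl hpos
  have haP : ∀ k, d < k → P.coeff k = 0 := fun k hk =>
    Polynomial.coeff_eq_zero_of_natDegree_lt (by omega)
  have haQ : ∀ k, d < k → Q.coeff k = 0 := fun k hk =>
    Polynomial.coeff_eq_zero_of_natDegree_lt (by omega)
  have hpQ' : ∀ t : ℝ, 0 ≤ t → δ * (1+t)^d ≤ ∑ k ∈ range (d+1), Q.coeff k * t ^ k := by
    intro t ht
    refine (hpQ t ht).trans (le_of_eq ?_)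
    apply Finset.sum_congr rfl
    intro k hk
    rw [hQcoeff k (Nat.lt_succ_iff.mp (Finset.mem_range.mp hk))]
  set AP : ℝ := ∑ k ∈ range (d+1), |P.coeff k| * k with hAPdef
  set AQ : ℝ := ∑ k ∈ range (d+1), |Q.coeff k| * k with hAQdef
  set n₀ : ℕ := ⌈(d * max AP AQ) / δ⌉₊ + 1 with hn₀def
  have hAP : 0 ≤ AP := Finset.sum_nonneg fun k _ => by positivity
  have hAQ : 0 ≤ AQ := Finset.sum_nonneg fun k _ => by positivity
  have hn₀P : (d : ℝ) * AP ≤ δ * n₀ := by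
    have h1 : (d * max AP AQ) / δ ≤ (n₀ : ℝ) := by
      calc (d * max AP AQ) / δ ≤ (⌈(d * max AP AQ) / δ⌉₊ : ℝ) := Nat.le_ceil _
        _ ≤ (n₀ : ℝ) := by rw [hn₀def]; push_cast; linarith
    have h2 : (d : ℝ) * AP ≤ d * max AP AQ := by
      apply mul_le_mul_of_nonneg_left (le_max_left _ _) (by positivity)
    calc (d : ℝ) * AP ≤ d * max AP AQ := h2
      _ = δ * ((d * max AP AQ) / δ) := by field_simp
      _ ≤ δ * n₀ := mul_le_mul_of_nonneg_left h1 (le_of_lt hδ)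
  have hn₀Q : (d : ℝ) * AQ ≤ δ * n₀ := by
    have h1 : (d * max AP AQ) / δ ≤ (n₀ : ℝ) := by
      calc (d * max AP AQ) / δ ≤ (⌈(d * max AP AQ) / δ⌉₊ : ℝ) := Nat.le_ceil _
        _ ≤ (n₀ : ℝ) := by rw [hn₀def]; push_cast; linarith
    have h2 : (d : ℝ) * AQ ≤ d * max AP AQ := by
      apply mul_le_mul_of_nonneg_left (le_max_right _ _) (by positivity)
    calc (d : ℝ) * AQ ≤ d * max AP AQ := h2
      _ = δ * ((d * max AP AQ) / δ) := by field_simp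
      _ ≤ δ * n₀ := mul_le_mul_of_nonneg_left h1 (le_of_lt hδ)
  refine ⟨2 * n₀ + d, ?_⟩
  intro i
  set N : ℕ := 2 * n₀ + d with hNdef
  set R : ℝ[X] := (X + Polynomial.C 1 : ℝ[X]) ^ N * P with hRdef
  by_cases hbig : N + d < i
  · -- beyond the degree
    apply le_of_eq
    symm
    apply Polynomial.coeff_eq_zero_of_natDegree_lt
    have hd1 : (X + Polynomial.C 1 : ℝ[X]).natDegree = 1 := Polynomial.natDegree_X_add_C 1
    have hdeg1 : ((X + Polynomial.C 1 : ℝ[X]) ^ N).natDegree ≤ N := by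
      calc ((X + Polynomial.C 1 : ℝ[X]) ^ N).natDegree ≤ N * (X + Polynomial.C 1 : ℝ[X]).natDegree :=
            Polynomial.natDegree_pow_le
        _ = N := by rw [hd1, mul_one]
    have hdegR : R.natDegree ≤ N + d := by
      rw [hRdef]
      apply le_trans (Polynomial.natDegree_mul_le)
      omega
    omega
  · push_neg at hbig
    by_cases hcase : i + n₀ ≤ N + 1
    · -- direct estimate with P
      have hiN : i ≤ N := by omega
      rw [hRdef, coeff_binom_mul]
      apply per_index d P.coeff haP δ hδ hpP N i hiN
      calc (d : ℝ) * AP ≤ δ * n₀ := hn₀P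
        _ ≤ δ * ((N - i + 1 : ℕ) : ℝ) := by
            apply mul_le_mul_of_nonneg_left _ (le_of_lt hδ)
            have : n₀ ≤ N - i + 1 := by omega
            exact_mod_cast this
    · -- use the reverse polynomial
      push_neg at hcase
      have hid : d ≤ i := by omega
      set i' : ℕ := N + d - i with hi'def
      have hi'N : i' ≤ N := by omega
      -- R.coeff i = (binom^N * Q).coeff i'
      have hRrev : R.coeff i = ((X + Polynomial.C 1 : ℝ[X]) ^ N * Q).coeff i' := by
        have hrev : R.reverse = (X + Polynomial.C 1 : ℝ[X]) ^ N * Q := by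
          rw [hRdef, Polynomial.reverse_mul_of_domain, reverse_one_add_X_pow, hQdef]
        have hdegR : R.natDegree = N + d := by
          rw [hRdef]
          rw [Polynomial.natDegree_mul (pow_ne_zero N (Polynomial.X_add_C_ne_zero 1)) hP0]
          rw [Polynomial.natDegree_pow, Polynomial.natDegree_X_add_C 1]
          rw [mul_one]
        have hco : R.coeff i = R.reverse.coeff i' := by
          rw [Polynomial.coeff_reverse, hdegR, Polynomial.revAt_le (show i' ≤ N + d by omega)]
          congr 1
          omega
        rw [hco, hrev]
      rw [hRrev, coeff_binom_mul]
      apply per_index d Q.coeff haQ δ hδ hpQ' N i' hi'N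
      calc (d : ℝ) * AQ ≤ δ * n₀ := hn₀Q
        _ ≤ δ * ((N - i' + 1 : ℕ) : ℝ) := by
            apply mul_le_mul_of_nonneg_left _ (le_of_lt hδ)
            have : n₀ ≤ N - i' + 1 := by omega
            exact_mod_cast this

lemma toLaurent_apply_coe (p : ℝ[X]) (n : ℕ) :
    (Polynomial.toLaurent p).coeff (n : ℤ) = p.coeff n := by
  rw [coeff_toLaurent]
  exact (Finsupp.mapDomain_apply Nat.castEmbedding.injective p.toFinsupp.coeff n).trans rfl

lemma toLaurent_apply_neg (p : ℝ[X]) (k : ℤ) (hk : k < 0) :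
    (Polynomial.toLaurent p).coeff k = 0 := by
  rw [coeff_toLaurent]
  apply Finsupp.mapDomain_notin_range
  rintro ⟨n, rfl⟩
  exact absurd hk (not_lt.mpr (Int.natCast_nonneg n))

lemma mul_T_apply (f : LaurentPolynomial ℝ) (m k : ℤ) :
    (f * T m : LaurentPolynomial ℝ).coeff k = f.coeff (k - m) := by
  have h := AddMonoidAlgebra.coeff_mul_single_apply f (1 : ℝ) m k
  rw [mul_one] at h
  exact h

lemma exists_poly (g : LaurentPolynomial ℝ) (hg : ∀ k : ℤ, k < 0 → g.coeff k = 0) :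
    ∃ P : ℝ[X], Polynomial.toLaurent P = g := by
  obtain ⟨n, P', hP'⟩ := g.exists_T_pow
  have hco : ∀ j : ℕ, j < n → P'.coeff j = 0 := by
    intro j hj
    have h1 : (Polynomial.toLaurent P').coeff (j : ℤ) = g.coeff ((j : ℤ) - n) := by
      rw [hP', mul_T_apply]
    rw [toLaurent_apply_coe] at h1
    rw [h1]
    apply hg
    omega
  obtain ⟨P, hP⟩ := (Polynomial.X_pow_dvd_iff.mpr hco : (X : ℝ[X]) ^ n ∣ P')
  refine ⟨P, ?_⟩
  have h2 : Polynomial.toLaurent P' = Polynomial.toLaurent P * T n := by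
    rw [hP, map_mul, Polynomial.toLaurent_X_pow, mul_comm]
  have h3 : g * T n = Polynomial.toLaurent P * T n := by rw [← hP', h2]
  have h4 := congrArg (fun x => x * T (-(n:ℤ))) h3
  simpa [mul_T_assoc] using h4.symm

lemma evalAt_eq_sum (f : LaurentPolynomial ℝ) (r : ℝ) :
    evalAt f r = f.coeff.sum (fun k c => c * r ^ k) := rfl

lemma evalAt_add (f g : LaurentPolynomial ℝ) (r : ℝ) :
    evalAt (f + g) r = evalAt f r + evalAt g r := by
  rw [evalAt_eq_sum, evalAt_eq_sum, evalAt_eq_sum, AddMonoidAlgebra.coeff_add]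
  apply Finsupp.sum_add_index'
  · intro k; simp
  · intro k b₁ b₂; ring

lemma evalAt_single (k : ℤ) (c : ℝ) (r : ℝ) :
    evalAt (AddMonoidAlgebra.single k c) r = c * r ^ k := by
  rw [evalAt_eq_sum, AddMonoidAlgebra.coeff_single]
  apply Finsupp.sum_single_index
  simp

lemma evalAt_toLaurent_T (P : ℝ[X]) (m : ℤ) (r : ℝ) (hr : 0 < r) :
    evalAt (Polynomial.toLaurent P * T m) r = P.eval r * r ^ m := by
  induction P using Polynomial.induction_on' with
  | add p q hp hq =>
    rw [map_add, add_mul, evalAt_add, hp, hq, Polynomial.eval_add]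
    ring
  | monomial n a =>
    have : Polynomial.toLaurent (Polynomial.monomial n a) * T m
        = AddMonoidAlgebra.single ((n : ℤ) + m) a := by
      rw [Polynomial.toLaurent_C_mul_T, single_eq_C_mul_T, mul_T_assoc]
    rw [this, evalAt_single, Polynomial.eval_monomial]
    rw [zpow_add₀ (ne_of_gt hr), zpow_natCast]
    ring

/-- Handelman's theorem: if `f ∈ ℝ[X^±]` satisfies `f(r) > 0` for all `r > 0` and its
positive and negative leading coefficients are strictly positive (expressed as: there is a
top-degree nonzero coefficient which is positive, and similarly a bottom-degree one), then
some nonzero Laurent polynomial `g` with nonnegative coefficients makes `f·g` nonzero with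
nonnegative coefficients. -/
theorem stmt10 (f : LaurentPolynomial ℝ)
    (hval : ∀ r : ℝ, 0 < r → 0 < evalAt f r)
    (hlcp : ∃ k : ℤ, 0 < f.coeff k ∧ ∀ j : ℤ, k < j → f.coeff j = 0)
    (hlcm : ∃ k : ℤ, 0 < f.coeff k ∧ ∀ j : ℤ, j < k → f.coeff j = 0) :
    ∃ g : LaurentPolynomial ℝ, g ≠ 0 ∧ (∀ k : ℤ, 0 ≤ g.coeff k) ∧
      f * g ≠ 0 ∧ (∀ k : ℤ, 0 ≤ (f * g).coeff k) := by
  obtain ⟨m, hm_pos, hm_zero⟩ := hlcm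
  obtain ⟨kp, hkp_pos, hkp_zero⟩ := hlcp
  have hg0 : ∀ k : ℤ, k < 0 → (f * T (-m) : LaurentPolynomial ℝ).coeff k = 0 := by
    intro k hk
    rw [mul_T_apply]
    apply hm_zero
    omega
  obtain ⟨P, hP⟩ := exists_poly (f * T (-m)) hg0
  have hftl : f = Polynomial.toLaurent P * T m := by
    have h := congrArg (fun x => x * T m) hP
    simpa [mul_T_assoc] using h.symm
  have hPcoeff : ∀ j : ℕ, P.coeff j = f.coeff ((j:ℤ) + m) := by
    intro j
    rw [← toLaurent_apply_coe, hP, mul_T_apply]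
    congr 1
    ring
  have hP0 : 0 < P.coeff 0 := by
    rw [hPcoeff]
    simpa using hm_pos
  have hPne : P ≠ 0 := fun h => by simp [h] at hP0
  have hkpm : m ≤ kp := by
    by_contra h
    push_neg at h
    exact absurd (hm_zero kp h) (ne_of_gt hkp_pos)
  set e : ℕ := (kp - m).toNat with hedef
  have he : (e:ℤ) + m = kp := by omega
  have hPe : P.coeff e = f.coeff kp := by rw [hPcoeff, he]
  have hdeg : P.natDegree = e := by
    apply le_antisymm
    · rw [Polynomial.natDegree_le_iff_coeff_eq_zero]
      intro j hj
      rw [hPcoeff]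
      apply hkp_zero
      omega
    · exact Polynomial.le_natDegree_of_ne_zero (by rw [hPe]; exact ne_of_gt hkp_pos)
  have hlead : 0 < P.coeff P.natDegree := by rw [hdeg, hPe]; exact hkp_pos
  have hpos : ∀ r : ℝ, 0 < r → 0 < P.eval r := by
    intro r hr
    have h1 : evalAt f r = P.eval r * r ^ m := by
      rw [hftl]
      exact evalAt_toLaurent_T P m r hr
    have h2 := hval r hr
    rw [h1] at h2
    have h3 : (0:ℝ) < r ^ m := zpow_pos hr m
    nlinarith
  obtain ⟨N, hN⟩ := poincare P hP0 hlead hpos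
  set B : ℝ[X] := (X + Polynomial.C 1 : ℝ[X]) ^ N with hBdef
  have hBne : B ≠ 0 := pow_ne_zero _ (Polynomial.X_add_C_ne_zero 1)
  have hBcoeff : ∀ j : ℕ, 0 ≤ B.coeff j := by
    intro j
    rw [hBdef, Polynomial.coeff_X_add_C_pow]
    positivity
  have hmul : f * Polynomial.toLaurent B = Polynomial.toLaurent (B * P) * T m := by
    rw [hftl, map_mul]
    ring
  refine ⟨Polynomial.toLaurent B, Polynomial.toLaurent_ne_zero.mpr hBne, ?_, ?_, ?_⟩
  · intro k
    rcases le_or_gt 0 k with hk | hk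
    · lift k to ℕ using hk with n
      rw [toLaurent_apply_coe]
      exact hBcoeff n
    · rw [toLaurent_apply_neg _ _ hk]
  · rw [hmul]
    intro hzero
    have h := congrArg (fun x => x * T (-m)) hzero
    simp only [mul_T_assoc, add_neg_cancel, T_zero, mul_one, zero_mul] at h
    exact absurd (Polynomial.toLaurent_eq_zero.mp h) (mul_ne_zero hBne hPne)
  · intro k
    rw [hmul, mul_T_apply]
    rcases le_or_gt 0 (k - m) with hk | hk
    · lift (k - m) to ℕ using hk with n hn
      rw [toLaurent_apply_coe]
      exact hN n
    · rw [toLaurent_apply_neg _ _ hk]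
end
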